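/- arXiv:2512.09266 — 2 statements merged into one kernel-verified Lean document; each statement's English description precedes it below -/
import Mathlib

section
/- Let L: ℝ^d → ℝ be a convex differentiable function and λ > 0. Suppose θ̂ minimizes θ ↦ L(θ) + λ‖θ‖₁, with associated dual vector ẑ defined by ∇L(θ̂) + λẑ = 0, where ẑ is a subgradient of ‖·‖₁ at θ̂ and satisfies ‖ẑ_{S^c}‖_∞ < 1 for an index set S. Then every minimizer θ̃ of θ ↦ L(θ) + λ‖θ‖₁ satisfies θ̃_{S^c} = 0. -/
open scoped BigOperators

lemma first_order_aux {E : Type*} [NormedAddCommGroup E] [NormedSpace ℝ E]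
    (L : E → ℝ) (hconv : ConvexOn ℝ Set.univ L) (hdiff : Differentiable ℝ L) (x y : E) :
    L x + fderiv ℝ L x (y - x) ≤ L y := by
  set v := y - x with hv
  set g : ℝ → ℝ := fun t => L (x + t • v) with hgdef
  have h1 : HasDerivAt (fun t : ℝ => x + t • v) v 0 := by
    simpa using ((hasDerivAt_id (0:ℝ)).smul_const v).const_add x
  have h2 : HasFDerivAt L (fderiv ℝ L x) ((fun t : ℝ => x + t • v) 0) := by
    simpa using (hdiff x).hasFDerivAt
  have hg : HasDerivAt g (fderiv ℝ L x v) 0 := h2.comp_hasDerivAt 0 h1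
  have hslope : Filter.Tendsto (slope g 0) (nhdsWithin 0 (Set.Ioi 0))
      (nhds (fderiv ℝ L x v)) :=
    (hasDerivAt_iff_tendsto_slope.mp hg).mono_left
      (nhdsWithin_mono _ (fun t ht => (ne_of_gt ht)))
  have hbound : ∀ t ∈ Set.Ioc (0:ℝ) 1, slope g 0 t ≤ L y - L x := by
    intro t ht
    have key : g t ≤ (1 - t) * L x + t * L y := by
      have := hconv.2 (Set.mem_univ x) (Set.mem_univ y)
        (by linarith [ht.2] : (0:ℝ) ≤ 1 - t) (le_of_lt ht.1) (by ring)
      have hx : (1 - t) • x + t • y = x + t • v := by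
        rw [hv]; module
      simpa [hgdef, hx] using this
    have hg0 : g 0 = L x := by simp [hgdef]
    rw [slope_def_field, sub_zero, div_le_iff₀ ht.1, hg0]
    nlinarith [key]
  have hle : fderiv ℝ L x v ≤ L y - L x := by
    refine le_of_tendsto hslope ?_
    filter_upwards [Ioc_mem_nhdsGT_of_mem (Set.mem_Ico.mpr ⟨le_rfl, one_pos⟩)] with t ht
    exact hbound t ht
  linarith

/-- Zero-pattern lemma (primal-dual witness): if `θ̂` minimizes `L(θ) + λ‖θ‖₁` with an
associated dual `ẑ` (a subgradient of `‖·‖₁` at `θ̂` with `∇L(θ̂) + λẑ = 0`) satisfying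
`‖ẑ_{Sᶜ}‖_∞ < 1`, then every minimizer `θ̃` satisfies `θ̃_{Sᶜ} = 0`. -/
theorem stmt13 (d : ℕ) (L : EuclideanSpace ℝ (Fin d) → ℝ)
    (hconv : ConvexOn ℝ Set.univ L) (hdiff : Differentiable ℝ L)
    (lam : ℝ) (hlam : 0 < lam) (S : Finset (Fin d))
    (θhat zhat : EuclideanSpace ℝ (Fin d))
    (hmin : ∀ θ, L θhat + lam * ∑ i, |θhat i| ≤ L θ + lam * ∑ i, |θ i|)
    (hgrad : gradient L θhat + lam • zhat = 0)
    (hsub1 : ∀ j, θhat j ≠ 0 → zhat j = Real.sign (θhat j))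
    (hsub2 : ∀ j, |zhat j| ≤ 1)
    (hstrict : ∀ j ∉ S, |zhat j| < 1) :
    ∀ θtil : EuclideanSpace ℝ (Fin d),
      (∀ θ, L θtil + lam * ∑ i, |θtil i| ≤ L θ + lam * ∑ i, |θ i|) →
      ∀ j ∉ S, θtil j = 0 := by
  intro θtil hmin' j hj
  -- both are minimizers of the same objective
  have hF : L θtil + lam * ∑ i, |θtil i| = L θhat + lam * ∑ i, |θhat i| :=
    le_antisymm (hmin' θhat) (hmin θtil)
  -- fderiv equals inner with gradient
  have hfd := hasGradientAt_iff_hasFDerivAt.mp (hdiff θhat).hasGradientAt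
  have hfe : fderiv ℝ L θhat = InnerProductSpace.toDual ℝ _ (gradient L θhat) := hfd.fderiv
  have hge : gradient L θhat = -(lam • zhat) := by
    have := hgrad; linear_combination (norm := module) this
  have hfo := first_order_aux L hconv hdiff θhat θtil
  have hval : fderiv ℝ L θhat (θtil - θhat)
      = -lam * (∑ i, zhat i * θtil i) + lam * (∑ i, zhat i * θhat i) := by
    rw [hfe, InnerProductSpace.toDual_apply_apply, hge]
    simp only [PiLp.inner_apply, RCLike.inner_apply, conj_trivial]
    simp only [PiLp.neg_apply, PiLp.smul_apply, PiLp.sub_apply, smul_eq_mul]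
    rw [Finset.mul_sum, Finset.mul_sum, ← Finset.sum_add_distrib]
    refine Finset.sum_congr rfl fun i _ => by ring
  have hZθhat : ∑ i, zhat i * θhat i = ∑ i, |θhat i| := by
    refine Finset.sum_congr rfl fun i _ => ?_
    by_cases h : θhat i = 0
    · simp [h]
    · rw [hsub1 i h]
      rcases lt_trichotomy (θhat i) 0 with h1 | h1 | h1
      · rw [Real.sign_of_neg h1, abs_of_neg h1]; ring
      · exact absurd h1 h
      · rw [Real.sign_of_pos h1, abs_of_pos h1]; ring
  -- key inequality : ∑ |θtil i| ≤ ∑ zhat i * θtil i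
  have hkey : ∑ i, |θtil i| ≤ ∑ i, zhat i * θtil i := by
    rw [hval, hZθhat] at hfo
    have := mul_le_mul_of_nonneg_left (le_of_eq hF) (le_of_lt hlam)
    nlinarith [hfo, hF]
  -- termwise bound
  have hterm : ∀ i, zhat i * θtil i ≤ |θtil i| := by
    intro i
    calc zhat i * θtil i ≤ |zhat i * θtil i| := le_abs_self _
      _ = |zhat i| * |θtil i| := abs_mul _ _
      _ ≤ 1 * |θtil i| := mul_le_mul_of_nonneg_right (hsub2 i) (abs_nonneg _)
      _ = |θtil i| := one_mul _
  have hzero : ∀ i ∈ Finset.univ, |θtil i| - zhat i * θtil i = 0 := by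
    have hsum0 : ∑ i, (|θtil i| - zhat i * θtil i) = 0 := by
      have h1 : ∑ i, (|θtil i| - zhat i * θtil i) ≤ 0 := by
        rw [Finset.sum_sub_distrib]; linarith [hkey]
      have h2 : 0 ≤ ∑ i, (|θtil i| - zhat i * θtil i) :=
        Finset.sum_nonneg fun i _ => by linarith [hterm i]
      linarith
    exact (Finset.sum_eq_zero_iff_of_nonneg fun i _ => by linarith [hterm i]).mp hsum0
  have hj0 : |θtil j| = zhat j * θtil j := by
    have := hzero j (Finset.mem_univ j); linarith
  by_contra hne
  have habs : 0 < |θtil j| := abs_pos.mpr hne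
  have : zhat j * θtil j ≤ |zhat j| * |θtil j| := by
    calc zhat j * θtil j ≤ |zhat j * θtil j| := le_abs_self _
      _ = |zhat j| * |θtil j| := abs_mul _ _
  nlinarith [hstrict j hj]
end

section
/- Let L: ℝ^d → ℝ be convex and twice continuously differentiable, λ > 0, and suppose θ̂ minimizes θ ↦ L(θ) + λ‖θ‖₁ with the restriction of the Hessian ∇²L to indices in S being strictly positive definite at every point, and suppose there is an optimal dual ẑ (subgradient of ‖θ̂‖₁ with ∇L(θ̂) + λẑ = 0) satisfying ‖ẑ_{S^c}‖_∞ < 1. Then θ̂ is the unique minimizer of θ ↦ L(θ) + λ‖θ‖₁. -/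
open scoped BigOperators
open scoped RealInnerProductSpace

section Aux

variable {n : ℕ}

private lemma aux_line_hasDerivAt (x u : EuclideanSpace ℝ (Fin n)) (t : ℝ) :
    HasDerivAt (fun s : ℝ => x + s • u) u t := by
  simpa using ((hasDerivAt_id t).smul_const u).const_add x

private lemma aux_convexOn_line {L : EuclideanSpace ℝ (Fin n) → ℝ}
    (hconv : ConvexOn ℝ Set.univ L) (x u : EuclideanSpace ℝ (Fin n)) :
    ConvexOn ℝ Set.univ (fun t : ℝ => L (x + t • u)) := by
  refine ⟨convex_univ, ?_⟩
  intro t1 _ t2 _ a b ha hb hab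
  have hkey : x + (a • t1 + b • t2) • u = a • (x + t1 • u) + b • (x + t2 • u) := by
    have hx : x = a • x + b • x := by rw [← add_smul, hab, one_smul]
    simp only [smul_eq_mul]
    nth_rewrite 1 [hx]
    module
  show L (x + (a • t1 + b • t2) • u) ≤ a • L (x + t1 • u) + b • L (x + t2 • u)
  rw [hkey]
  exact hconv.2 (Set.mem_univ _) (Set.mem_univ _) ha hb hab

private lemma aux_first_order {L : EuclideanSpace ℝ (Fin n) → ℝ}
    (hconv : ConvexOn ℝ Set.univ L) (hdiff : Differentiable ℝ L)
    (x y : EuclideanSpace ℝ (Fin n)) :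
    L x + ⟪gradient L x, y - x⟫ ≤ L y := by
  set u := y - x with hu
  have hF : HasFDerivAt L (InnerProductSpace.toDual ℝ _ (gradient L x))
      ((fun t : ℝ => x + t • u) 0) := by
    simpa using (hdiff x).hasGradientAt.hasFDerivAt
  have hφ : HasDerivAt (fun t : ℝ => L (x + t • u)) ⟪gradient L x, u⟫ 0 := by
    have := hF.comp_hasDerivAt 0 (aux_line_hasDerivAt x u 0)
    simpa [Function.comp_def, InnerProductSpace.toDual_apply_apply] using this
  have hcv := aux_convexOn_line hconv x u
  have hs := hcv.le_slope_of_hasDerivAt (Set.mem_univ (0:ℝ)) (Set.mem_univ (1:ℝ))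
    one_pos hφ
  have h1 : x + (1:ℝ) • u = y := by rw [one_smul, hu]; abel
  have h0 : x + (0:ℝ) • u = x := by simp
  rw [slope_def_field] at hs
  rw [h1, h0] at hs
  simp only [sub_zero, div_one] at hs
  linarith

private lemma aux_sign_mul_self (x : ℝ) (h : x ≠ 0) : Real.sign x * x = |x| := by
  rcases h.lt_or_gt with hx | hx
  · rw [Real.sign_of_neg hx, abs_of_neg hx]; ring
  · rw [Real.sign_of_pos hx, abs_of_pos hx]; ring

private lemma aux_abs_sign (x : ℝ) (h : x ≠ 0) : |Real.sign x| = 1 := by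
  rcases h.lt_or_gt with hx | hx
  · rw [Real.sign_of_neg hx]; norm_num
  · rw [Real.sign_of_pos hx]; norm_num

private lemma aux_convexOn_sum_abs (c m : Fin n → ℝ) :
    ConvexOn ℝ Set.univ (fun t : ℝ => ∑ i, |c i + t * m i|) := by
  refine ⟨convex_univ, ?_⟩
  intro x _ y _ a b ha hb hab
  simp only [smul_eq_mul, Finset.mul_sum, ← Finset.sum_add_distrib]
  refine Finset.sum_le_sum fun i _ => ?_
  have hkey : c i + (a * x + b * y) * m i = a * (c i + x * m i) + b * (c i + y * m i) := by
    linear_combination (-(c i)) * hab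
  rw [hkey]
  calc |a * (c i + x * m i) + b * (c i + y * m i)|
      ≤ |a * (c i + x * m i)| + |b * (c i + y * m i)| := abs_add_le _ _
    _ = a * |c i + x * m i| + b * |c i + y * m i| := by
        rw [abs_mul, abs_mul, abs_of_nonneg ha, abs_of_nonneg hb]

end Aux

/-- Uniqueness of the L1-regularized minimizer: if `θ̂` minimizes `L(θ) + λ‖θ‖₁` with a
dual `ẑ` satisfying `‖ẑ_{Sᶜ}‖_∞ < 1`, and the Hessian of `L` restricted to directions
supported on `S` is strictly positive definite at every point, then `θ̂` is the unique
minimizer. -/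
theorem stmt19 (d : ℕ) (L : EuclideanSpace ℝ (Fin d) → ℝ)
    (hconv : ConvexOn ℝ Set.univ L) (hsmooth : ContDiff ℝ 2 L)
    (lam : ℝ) (hlam : 0 < lam) (S : Finset (Fin d))
    (θhat zhat : EuclideanSpace ℝ (Fin d))
    (hmin : ∀ θ, L θhat + lam * ∑ i, |θhat i| ≤ L θ + lam * ∑ i, |θ i|)
    (hgrad : gradient L θhat + lam • zhat = 0)
    (hsub1 : ∀ j, θhat j ≠ 0 → zhat j = Real.sign (θhat j))
    (hsub2 : ∀ j, |zhat j| ≤ 1)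
    (hstrict : ∀ j ∉ S, |zhat j| < 1)
    (hhess : ∀ θ, ∀ v : EuclideanSpace ℝ (Fin d), v ≠ 0 → (∀ j ∉ S, v j = 0) →
      0 < iteratedFDeriv ℝ 2 L θ ![v, v]) :
    ∀ θtil : EuclideanSpace ℝ (Fin d),
      (∀ θ, L θtil + lam * ∑ i, |θtil i| ≤ L θ + lam * ∑ i, |θ i|) →
      θtil = θhat := by
  intro θtil hmin'
  have hdiff : Differentiable ℝ L := hsmooth.differentiable (by norm_num)
  -- equality of optimal values
  have heq : L θtil + lam * ∑ i, |θtil i| = L θhat + lam * ∑ i, |θhat i| :=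
    le_antisymm (hmin' θhat) (hmin θtil)
  -- gradient identity
  have hgz : gradient L θhat = (-lam) • zhat := by
    have : gradient L θhat = -(lam • zhat) := by
      rw [← sub_eq_zero]; rw [sub_neg_eq_add]; exact hgrad
    rw [this, neg_smul]
  -- inner product of zhat with θhat equals the l1 norm of θhat
  have hzh : ∑ i, zhat i * θhat i = ∑ i, |θhat i| := by
    refine Finset.sum_congr rfl fun i _ => ?_
    by_cases h : θhat i = 0
    · simp [h]
    · rw [hsub1 i h, aux_sign_mul_self _ h]
  -- first-order inequality
  have hfo := aux_first_order hconv hdiff θhat θtil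
  have hinner : ⟪gradient L θhat, θtil - θhat⟫
      = (-lam) * (∑ i, zhat i * θtil i - ∑ i, zhat i * θhat i) := by
    rw [hgz]
    rw [real_inner_smul_left]
    congr 1
    rw [← Finset.sum_sub_distrib]
    rw [PiLp.inner_apply]
    refine Finset.sum_congr rfl fun i _ => ?_
    simp [PiLp.sub_apply, mul_sub]; ring
  -- key inequality : ‖θtil‖₁ ≤ ⟨zhat, θtil⟩
  have hkey : ∑ i, |θtil i| ≤ ∑ i, zhat i * θtil i := by
    rw [hinner, hzh] at hfo
    have hineq : (-lam) * (∑ i, zhat i * θtil i - ∑ i, |θhat i|)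
        ≤ lam * (∑ i, |θhat i|) - lam * (∑ i, |θtil i|) := by linarith
    nlinarith [hineq]
  -- termwise inequality
  have hterm : ∀ i, zhat i * θtil i ≤ |θtil i| := by
    intro i
    calc zhat i * θtil i ≤ |zhat i * θtil i| := le_abs_self _
      _ = |zhat i| * |θtil i| := abs_mul _ _
      _ ≤ 1 * |θtil i| := mul_le_mul_of_nonneg_right (hsub2 i) (abs_nonneg _)
      _ = |θtil i| := one_mul _
  have hsum0 : ∑ i, (|θtil i| - zhat i * θtil i) = 0 := by
    rw [Finset.sum_sub_distrib]
    have h1 : (0:ℝ) ≤ ∑ i, (|θtil i| - zhat i * θtil i) :=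
      Finset.sum_nonneg fun i _ => by linarith [hterm i]
    rw [Finset.sum_sub_distrib] at h1
    linarith
  have hterm0 : ∀ i, |θtil i| - zhat i * θtil i = 0 := by
    intro i
    have := (Finset.sum_eq_zero_iff_of_nonneg
      (fun i _ => by linarith [hterm i] : ∀ i ∈ Finset.univ, (0:ℝ) ≤ |θtil i| - zhat i * θtil i)).mp
      hsum0 i (Finset.mem_univ i)
    exact this
  -- support of θtil is in S
  have hsupp_til : ∀ j ∉ S, θtil j = 0 := by
    intro j hj
    by_contra hne
    have h1 : |θtil j| = zhat j * θtil j := by linarith [hterm0 j]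
    have h2 : zhat j * θtil j ≤ |zhat j| * |θtil j| := by
      calc zhat j * θtil j ≤ |zhat j * θtil j| := le_abs_self _
        _ = |zhat j| * |θtil j| := abs_mul _ _
    have h3 : |zhat j| * |θtil j| < 1 * |θtil j| :=
      mul_lt_mul_of_pos_right (hstrict j hj) (abs_pos.mpr hne)
    rw [one_mul] at h3
    linarith
  -- support of θhat is in S
  have hsupp_hat : ∀ j ∉ S, θhat j = 0 := by
    intro j hj
    by_contra hne
    have := aux_abs_sign (θhat j) hne
    rw [← hsub1 j hne] at this
    linarith [hstrict j hj]
  -- the difference direction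
  by_contra hne
  set v : EuclideanSpace ℝ (Fin d) := θtil - θhat with hv
  have hvne : v ≠ 0 := sub_ne_zero.mpr hne
  have hvsupp : ∀ j ∉ S, v j = 0 := by
    intro j hj
    show θtil j - θhat j = 0
    rw [hsupp_til j hj, hsupp_hat j hj, sub_zero]
  -- strict convexity of L along the line θhat + t v
  set φ : ℝ → ℝ := fun t => L (θhat + t • v) with hφdef
  have hd1 : ∀ t : ℝ, HasDerivAt φ (fderiv ℝ L (θhat + t • v) v) t := by
    intro t
    have := (hdiff (θhat + t • v)).hasFDerivAt.comp_hasDerivAt t (aux_line_hasDerivAt θhat v t)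
    simpa [Function.comp_def, hφdef] using this
  have hderiv1 : deriv φ = fun t => fderiv ℝ L (θhat + t • v) v :=
    funext fun t => (hd1 t).deriv
  have hG : Differentiable ℝ (fderiv ℝ L) :=
    (hsmooth.fderiv_right (m := 1) (by norm_num)).differentiable (by norm_num)
  have hd2 : ∀ t : ℝ, HasDerivAt (fun t => fderiv ℝ L (θhat + t • v) v)
      (fderiv ℝ (fderiv ℝ L) (θhat + t • v) v v) t := by
    intro t
    have hc : HasDerivAt (fun t : ℝ => fderiv ℝ L (θhat + t • v))
        (fderiv ℝ (fderiv ℝ L) (θhat + t • v) v) t := by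
      have := (hG (θhat + t • v)).hasFDerivAt.comp_hasDerivAt t (aux_line_hasDerivAt θhat v t)
      simpa [Function.comp_def] using this
    have := hc.clm_apply (hasDerivAt_const t v)
    simpa using this
  have hderiv2 : ∀ t : ℝ, deriv (deriv φ) t = iteratedFDeriv ℝ 2 L (θhat + t • v) ![v, v] := by
    intro t
    rw [hderiv1, (hd2 t).deriv, iteratedFDeriv_two_apply]
    simp
  have hφstrict : StrictConvexOn ℝ Set.univ φ := by
    refine strictConvexOn_of_deriv2_pos' convex_univ ?_ ?_
    · have hc : Continuous φ := by
        apply hsmooth.continuous.comp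
        exact continuous_const.add (continuous_id.smul continuous_const)
      exact hc.continuousOn
    · intro t _
      have : deriv^[2] φ t = deriv (deriv φ) t := rfl
      rw [this, hderiv2 t]
      exact hhess _ v hvne hvsupp
  -- strict convexity of the full objective along the line
  set ψ : ℝ → ℝ := fun t => φ t + lam * ∑ i, |θhat i + t * v i| with hψdef
  have hψstrict : StrictConvexOn ℝ Set.univ ψ := by
    refine hφstrict.add_convexOn ?_
    have := (aux_convexOn_sum_abs (fun i => θhat i) (fun i => v i)).smul hlam.le
    simpa [smul_eq_mul] using this
  -- values of ψ
  have hcoord : ∀ (t : ℝ) (i : Fin d), (θhat + t • v) i = θhat i + t * v i := by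
    intro t i
    simp [PiLp.add_apply, PiLp.smul_apply, smul_eq_mul]
  have hψ0 : ψ 0 = L θhat + lam * ∑ i, |θhat i| := by
    simp [hψdef, hφdef]
  have hψ1 : ψ 1 = L θtil + lam * ∑ i, |θtil i| := by
    have h1 : θhat + (1:ℝ) • v = θtil := by rw [one_smul, hv]; abel
    have h2 : ∀ i, θhat i + 1 * v i = θtil i := by
      intro i; rw [← hcoord 1 i, h1]
    have hs : (∑ i, |θhat i + (1:ℝ) * v i|) = ∑ i, |θtil i| :=
      Finset.sum_congr rfl fun i _ => by rw [h2 i]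
    simp only [hψdef, hφdef, h1, hs]
  have hψhalf : ψ (1/2) = L (θhat + (1/2 : ℝ) • v) + lam * ∑ i, |(θhat + (1/2:ℝ) • v) i| := by
    have hs : (∑ i, |θhat i + (1/2:ℝ) * v i|) = ∑ i, |(θhat + (1/2:ℝ) • v) i| :=
      Finset.sum_congr rfl fun i _ => by rw [hcoord (1/2) i]
    simp only [hψdef, hφdef, hs]
  -- strict Jensen at midpoint
  have hlt := hψstrict.2 (Set.mem_univ (0:ℝ)) (Set.mem_univ (1:ℝ)) (by norm_num)
    (by norm_num : (0:ℝ) < 1/2) (by norm_num : (0:ℝ) < 1/2) (by norm_num)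
  have hmid : (1/2 : ℝ) • (0:ℝ) + (1/2 : ℝ) • (1:ℝ) = 1/2 := by norm_num
  rw [hmid] at hlt
  have hlow := hmin (θhat + (1/2 : ℝ) • v)
  rw [← hψhalf] at hlow
  rw [hψ0, hψ1] at hlt
  simp only [smul_eq_mul] at hlt
  linarith [heq]
end
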